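/- Let x, y, x', y' ∈ ℝ² with x ≠ y and x' ≠ y'. Then |K(x−y) − K(x'−y')| ≤ (|x−x'| + |y−y'|) / (|x−y| |x'−y'|), where K(w) = w^⊥/|w|². -/
import Mathlib


noncomputable section

abbrev E2 := EuclideanSpace ℝ (Fin 2)

/-- Rotation of a planar vector by π/2. -/
def perp (w : E2) : E2 := (WithLp.equiv 2 (Fin 2 → ℝ)).symm ![-w 1, w 0]

/-- The (unnormalized) Biot–Savart kernel. -/
def K (w : E2) : E2 := (1 / ‖w‖ ^ 2) • perp w

lemma perp_apply (w : E2) : perp w = ![-w 1, w 0] := rfl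

lemma perp_sub (u v : E2) : perp (u - v) = perp u - perp v := by
  ext i
  fin_cases i <;> simp [perp_apply] <;> ring

lemma perp_smul (c : ℝ) (u : E2) : perp (c • u) = c • perp u := by
  ext i
  fin_cases i <;> simp [perp_apply] <;> ring

lemma norm_perp (w : E2) : ‖perp w‖ = ‖w‖ := by
  simp only [EuclideanSpace.norm_eq, Fin.sum_univ_two, perp_apply]
  simp [Matrix.cons_val_zero, Matrix.cons_val_one]
  ring_nf

lemma inv_center_sub (a b : E2) (ha : a ≠ 0) (hb : b ≠ 0) :
    ‖(1 / ‖a‖ ^ 2) • a - (1 / ‖b‖ ^ 2) • b‖ = ‖a - b‖ / (‖a‖ * ‖b‖) := by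
  have hA : (0:ℝ) < ‖a‖ := norm_pos_iff.mpr ha
  have hB : (0:ℝ) < ‖b‖ := norm_pos_iff.mpr hb
  have hsq : ‖(1 / ‖a‖ ^ 2) • a - (1 / ‖b‖ ^ 2) • b‖ ^ 2
      = (‖a - b‖ / (‖a‖ * ‖b‖)) ^ 2 := by
    rw [norm_sub_sq_real, div_pow, norm_sub_sq_real, norm_smul, norm_smul,
      real_inner_smul_left, real_inner_smul_right]
    simp only [norm_div, norm_one, Real.norm_eq_abs, sq_abs, abs_pow, abs_norm]
    field_simp
    ring
  have h1 : (0:ℝ) ≤ ‖(1 / ‖a‖ ^ 2) • a - (1 / ‖b‖ ^ 2) • b‖ := norm_nonneg _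
  have h2 : (0:ℝ) ≤ ‖a - b‖ / (‖a‖ * ‖b‖) := by positivity
  nlinarith [hsq, h1, h2]

theorem stmt_16 (x y x' y' : E2) (h : x ≠ y) (h' : x' ≠ y') :
    ‖K (x - y) - K (x' - y')‖ ≤ (‖x - x'‖ + ‖y - y'‖) / (‖x - y‖ * ‖x' - y'‖) := by
  have ha : x - y ≠ 0 := sub_ne_zero_of_ne h
  have hb : x' - y' ≠ 0 := sub_ne_zero_of_ne h'
  have hA : (0:ℝ) < ‖x - y‖ := norm_pos_iff.mpr ha
  have hB : (0:ℝ) < ‖x' - y'‖ := norm_pos_iff.mpr hb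
  have key : ‖K (x - y) - K (x' - y')‖ = ‖(x - y) - (x' - y')‖ / (‖x - y‖ * ‖x' - y'‖) := by
    have : K (x - y) - K (x' - y')
        = perp ((1 / ‖x - y‖ ^ 2) • (x - y) - (1 / ‖x' - y'‖ ^ 2) • (x' - y')) := by
      rw [perp_sub, perp_smul, perp_smul]; rfl
    rw [this, norm_perp, inv_center_sub _ _ ha hb]
  rw [key]
  have heq : x - y - (x' - y') = (x - x') - (y - y') := by abel
  rw [heq]
  exact div_le_div_of_nonneg_right (norm_sub_le _ _) (by positivity) |>.trans_eq rfl
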